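/- For the Poincaré disc 𝔻 = {z ∈ ℂ : |z| < 1} with Poincaré distance ω and base point 0, every horofunction is of the form h(z) = ½ log( |ξ − z|² / (1 − |z|²) ) for some ξ ∈ ℂ with |ξ| = 1. -/

import Mathlib

/-- The inverse hyperbolic tangent, `tanh⁻¹ t = ½ log((1+t)/(1−t))`. -/
noncomputable def arctanh (t : ℝ) : ℝ := (1 / 2) * Real.log ((1 + t) / (1 - t))

/-- The Poincaré distance on the unit disc `𝔻 ⊂ ℂ`:
`ω(x,y) = tanh⁻¹ |(x−y)/(1−x̄y)|`. -/
noncomputable def poincareDist (x y : ℂ) : ℝ :=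
  arctanh (‖(x - y) / (1 - (starRingEnd ℂ x) * y)‖)

lemma abs_key (z y : ℂ) :
    (‖1 - (starRingEnd ℂ z) * y‖)^2 - (‖z - y‖)^2
      = (1 - (‖z‖)^2) * (1 - (‖y‖)^2) := by
  simp only [Complex.sq_norm]
  simp only [Complex.normSq_apply, Complex.sub_re, Complex.sub_im, Complex.mul_re,
    Complex.mul_im, Complex.one_re, Complex.one_im, Complex.conj_re, Complex.conj_im]
  ring

lemma pd_zero (y : ℂ) : poincareDist 0 y = arctanh (‖y‖) := by
  simp [poincareDist]

lemma diff_formula {z y : ℂ} (hz : ‖z‖ < 1) (hy : ‖y‖ < 1) :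
    poincareDist z y - poincareDist 0 y
      = (1/2) * Real.log ((‖z - y‖ + ‖1 - (starRingEnd ℂ z) * y‖)^2
          / ((1 + ‖y‖)^2 * (1 - (‖z‖)^2))) := by
  set A := ‖z - y‖ with hA
  set D := ‖1 - (starRingEnd ℂ z) * y‖ with hD
  set a := ‖y‖ with ha
  have ha0 : 0 ≤ a := norm_nonneg y
  have hA0 : 0 ≤ A := norm_nonneg _
  have hD0 : 0 ≤ D := norm_nonneg _
  have hz0 : 0 ≤ ‖z‖ := norm_nonneg z
  have hkey : D^2 - A^2 = (1 - (‖z‖)^2) * (1 - a^2) := abs_key z y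
  have hzpos : 0 < 1 - (‖z‖)^2 := by nlinarith
  have hapos : 0 < 1 - a^2 := by nlinarith
  have hAD : A < D := lt_of_pow_lt_pow_left₀ 2 hD0 (by nlinarith)
  have hDpos : 0 < D := lt_of_le_of_lt hA0 hAD
  have hb : ‖(z - y) / (1 - (starRingEnd ℂ z) * y)‖ = A / D := by
    rw [norm_div]
  have h0 : poincareDist 0 y = arctanh a := by simp [poincareDist, arctanh, ha]
  have hfrac : (1 + A/D)/(1 - A/D) = (D + A)/(D - A) := by
    have hDne : D ≠ 0 := ne_of_gt hDpos
    have hDA : D - A ≠ 0 := by linarith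
    field_simp
  have hne1 : (D + A)/(D - A) ≠ 0 := ne_of_gt (div_pos (by linarith) (by linarith))
  have hne2 : (1 + a)/(1 - a) ≠ 0 := ne_of_gt (div_pos (by linarith) (by linarith))
  have harg : ((D + A)/(D - A)) / ((1 + a)/(1 - a))
      = (A + D)^2 / ((1 + a)^2 * (1 - (‖z‖)^2)) := by
    have h1 : D - A ≠ 0 := by linarith
    have h2 : (1:ℝ) + a ≠ 0 := by linarith
    have h3 : (1:ℝ) - a ≠ 0 := by linarith
    have h4 : (1:ℝ) - (‖z‖)^2 ≠ 0 := ne_of_gt hzpos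
    field_simp
    linear_combination (-(D+A)) * hkey
  rw [poincareDist, hb, h0, arctanh, arctanh, hfrac, ← mul_sub,
    ← Real.log_div hne1 hne2, harg]

lemma arctanh_mono {t c : ℝ} (ht0 : 0 ≤ t) (htc : t ≤ c) (hc : c < 1) :
    arctanh t ≤ arctanh c := by
  unfold arctanh
  have h1 : (1 + t)/(1 - t) ≤ (1 + c)/(1 - c) := by
    rw [div_le_div_iff₀ (by linarith) (by linarith)]
    nlinarith
  have h2 : Real.log ((1 + t)/(1 - t)) ≤ Real.log ((1 + c)/(1 - c)) :=
    Real.log_le_log (by apply div_pos <;> linarith) h1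
  linarith

/-- For the Poincaré disc with base point `0`, every horofunction, i.e. every
pointwise limit `h` of `z ↦ ω(z, y_k) − ω(0, y_k)` along a sequence `(y_k) ⊂ 𝔻` with
`ω(0, y_k) → ∞`, is of the form `h(z) = ½ log(|ξ − z|²/(1 − |z|²))` for some `ξ` with
`|ξ| = 1`. -/
theorem stmt9 (y : ℕ → ℂ) (hy : ∀ k, ‖y k‖ < 1)
    (hyinf : Filter.Tendsto (fun k => poincareDist 0 (y k)) Filter.atTop Filter.atTop)
    (h : ℂ → ℝ)
    (hlim : ∀ z : ℂ, ‖z‖ < 1 →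
      Filter.Tendsto (fun k => poincareDist z (y k) - poincareDist 0 (y k))
        Filter.atTop (nhds (h z))) :
    ∃ ξ : ℂ, ‖ξ‖ = 1 ∧ ∀ z : ℂ, ‖z‖ < 1 →
      h z = (1 / 2) * Real.log ((‖ξ - z‖) ^ 2 / (1 - (‖z‖) ^ 2)) := by
  -- extract a convergent subsequence
  obtain ⟨ξ, hξmem, φ, hφ, hyξ⟩ :=
    (isCompact_closedBall (0:ℂ) 1).tendsto_subseq
      (fun k => by simpa [Metric.mem_closedBall, Complex.dist_eq] using (hy k).le)
  have habs : Filter.Tendsto (fun j => ‖y (φ j)‖) Filter.atTop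
      (nhds (‖ξ‖)) := (continuous_norm.tendsto ξ).comp hyξ
  have hξle : ‖ξ‖ ≤ 1 := by
    simpa [Metric.mem_closedBall, Complex.dist_eq] using hξmem
  have hξ1 : ‖ξ‖ = 1 := by
    by_contra hne
    have hξlt : ‖ξ‖ < 1 := lt_of_le_of_ne hξle hne
    set c : ℝ := (1 + ‖ξ‖)/2 with hc
    have hc1 : c < 1 := by simp only [hc]; linarith
    have hξc : ‖ξ‖ < c := by simp only [hc]; linarith
    have hsmall : ∀ᶠ j in Filter.atTop, ‖y (φ j)‖ < c :=
      habs.eventually_lt_const hξc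
    have hbig : ∀ᶠ j in Filter.atTop, arctanh c < poincareDist 0 (y (φ j)) :=
      (hyinf.comp hφ.tendsto_atTop).eventually_gt_atTop (arctanh c)
    obtain ⟨j, hj1, hj2⟩ := (hbig.and hsmall).exists
    rw [pd_zero] at hj1
    exact absurd (arctanh_mono (norm_nonneg _) hj2.le hc1) (not_le.mpr hj1)
  refine ⟨ξ, hξ1, fun z hz => ?_⟩
  have hsub : Filter.Tendsto
      (fun j => poincareDist z (y (φ j)) - poincareDist 0 (y (φ j)))
      Filter.atTop (nhds (h z)) := (hlim z hz).comp hφ.tendsto_atTop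
  have hξz : ξ ≠ z := fun e => by rw [← e, hξ1] at hz; exact lt_irrefl _ hz
  have hr : 0 < ‖ξ - z‖ := norm_pos_iff.mpr (sub_ne_zero.mpr hξz)
  have hzsq : 0 < 1 - (‖z‖)^2 := by
    nlinarith [norm_nonneg z]
  -- abs(z - ξ) = abs(ξ - z)
  have habs_comm : ‖z - ξ‖ = ‖ξ - z‖ := by
    exact norm_sub_rev z ξ
  -- abs(1 - conj z * ξ) = abs(ξ - z)
  have hDval : ‖1 - (starRingEnd ℂ z) * ξ‖ = ‖ξ - z‖ := by
    have hconj : ξ * (starRingEnd ℂ) ξ = 1 := by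
      rw [Complex.mul_conj]
      norm_cast
      rw [← Complex.sq_norm, hξ1]; norm_num
    have hre : (1:ℂ) - (starRingEnd ℂ z) * ξ = ξ * (starRingEnd ℂ) (ξ - z) := by
      rw [map_sub, mul_sub, hconj]; ring
    rw [hre, norm_mul, hξ1, Complex.norm_conj, one_mul]
  have tA : Filter.Tendsto (fun j => ‖z - y (φ j)‖) Filter.atTop
      (nhds (‖ξ - z‖)) := by
    have h1 : Filter.Tendsto (fun j => z - y (φ j)) Filter.atTop (nhds (z - ξ)) :=
      tendsto_const_nhds.sub hyξ
    have h2 := (continuous_norm.tendsto _).comp h1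
    rwa [habs_comm] at h2
  have tD : Filter.Tendsto (fun j => ‖1 - (starRingEnd ℂ z) * y (φ j)‖)
      Filter.atTop (nhds (‖ξ - z‖)) := by
    have h1 : Filter.Tendsto (fun j => (1:ℂ) - (starRingEnd ℂ z) * y (φ j)) Filter.atTop
        (nhds (1 - (starRingEnd ℂ z) * ξ)) :=
      tendsto_const_nhds.sub (tendsto_const_nhds.mul hyξ)
    have h2 := (continuous_norm.tendsto _).comp h1
    rwa [hDval] at h2
  have ta : Filter.Tendsto (fun j => ‖y (φ j)‖) Filter.atTop (nhds 1) := by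
    rwa [hξ1] at habs
  have tE : Filter.Tendsto
      (fun j => (‖z - y (φ j)‖ + ‖1 - (starRingEnd ℂ z) * y (φ j)‖)^2
          / ((1 + ‖y (φ j)‖)^2 * (1 - (‖z‖)^2)))
      Filter.atTop
      (nhds ((‖ξ - z‖ + ‖ξ - z‖)^2
          / ((1 + (1:ℝ))^2 * (1 - (‖z‖)^2)))) := by
    apply Filter.Tendsto.div ((tA.add tD).pow 2)
      (((tendsto_const_nhds.add ta).pow 2).mul tendsto_const_nhds)
    positivity
  have hval : (‖ξ - z‖ + ‖ξ - z‖)^2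
      / ((1 + (1:ℝ))^2 * (1 - (‖z‖)^2))
      = (‖ξ - z‖)^2 / (1 - (‖z‖)^2) := by
    rw [div_eq_div_iff (by positivity) (ne_of_gt hzsq)]
    ring
  rw [hval] at tE
  have hpos : (‖ξ - z‖)^2 / (1 - (‖z‖)^2) ≠ 0 := by positivity
  have tlog := (tE.log hpos).const_mul (1/2 : ℝ)
  have hfinal : Filter.Tendsto
      (fun j => poincareDist z (y (φ j)) - poincareDist 0 (y (φ j)))
      Filter.atTop
      (nhds ((1/2) * Real.log ((‖ξ - z‖)^2 / (1 - (‖z‖)^2)))) := by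
    apply tlog.congr
    intro j
    exact (diff_formula hz (hy (φ j))).symm
  exact tendsto_nhds_unique hsub hfinal
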